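/- arXiv:1811.06392 — 2 statements merged into one kernel-verified Lean document; each statement's English description precedes it below -/
import Mathlib

section
/- Let A : ℕ → ℕ be defined by A(0) = 1, A(1) = 2, and A(n) = 1 + C(A(n−2)+1, 2) + A(n−2)·(A(n−1) − A(n−2)) for n ≥ 2, and for n ≥ 2 let E(n) = log(1 + 1/(2·A(n−1)) − A(n−2)/(2·A(n−1)) + 1/(A(n−1)·A(n−2))). Let φ = (1+√5)/2 and ψ = (1−√5)/2. Then for all n ≥ 2, log A(n) = (log 2)·(φⁿ − ψⁿ)/√5 + (1/√5)·∑_{i=2}^{n} E(i)·(φ^{n−i+1} − ψ^{n−i+1}). -/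
open Real

def A : ℕ → ℕ
  | 0 => 1
  | 1 => 2
  | n + 2 => 1 + Nat.choose (A n + 1) 2 + A n * (A (n + 1) - A n)

noncomputable def E (n : ℕ) : ℝ :=
  Real.log (1 + 1 / (2 * (A (n - 1) : ℝ)) - (A (n - 2) : ℝ) / (2 * (A (n - 1) : ℝ))
    + 1 / ((A (n - 1) : ℝ) * (A (n - 2) : ℝ)))

noncomputable def φ : ℝ := (1 + Real.sqrt 5) / 2
noncomputable def ψ : ℝ := (1 - Real.sqrt 5) / 2

lemma A_pos (n : ℕ) : 1 ≤ A n := by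
  match n with
  | 0 => simp [A]
  | 1 => simp [A]
  | n + 2 =>
    show 1 ≤ 1 + Nat.choose (A n + 1) 2 + A n * (A (n + 1) - A n)
    omega

lemma A_two_mul (n : ℕ) :
    2 * A (n + 2) = 2 + A n * (A n + 1) + 2 * (A n * (A (n + 1) - A n)) := by
  show 2 * (1 + Nat.choose (A n + 1) 2 + A n * (A (n + 1) - A n)) = _
  have h : 2 * Nat.choose (A n + 1) 2 = A n * (A n + 1) := by
    rw [Nat.choose_two_right, Nat.add_sub_cancel]
    rw [Nat.mul_div_cancel']
    · ring
    · have := Nat.even_mul_succ_self (A n)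
      rw [mul_comm] at this
      exact this.two_dvd
  omega

lemma A_lt (n : ℕ) : A n < A (n + 1) := by
  induction n with
  | zero => decide
  | succ n ih =>
    show A (n + 1) < A (n + 2)
    have ha := A_pos n
    have h2 := A_two_mul n
    have h3 : A (n + 1) - A n ≤ A n * (A (n + 1) - A n) :=
      Nat.le_mul_of_pos_left _ ha
    have h4 : A n ≤ A n * A n := Nat.le_mul_of_pos_left _ ha
    have h5 : A n * (A n + 1) = A n * A n + A n := by ring
    omega

noncomputable def G (k : ℕ) : ℝ := φ ^ k - ψ ^ k

lemma sqrt5_pos : (0:ℝ) < Real.sqrt 5 := Real.sqrt_pos.2 (by norm_num)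

lemma sq5 : Real.sqrt 5 ^ 2 = 5 := Real.sq_sqrt (by norm_num)

lemma G_one : G 1 = Real.sqrt 5 := by
  simp only [G, φ, ψ, pow_one]; ring

lemma G_zero : G 0 = 0 := by simp [G]

lemma G_rec (k : ℕ) : G (k + 2) = G (k + 1) + G k := by
  have hφ : φ ^ 2 = φ + 1 := by
    simp only [φ]; linear_combination sq5 / 4
  have hψ : ψ ^ 2 = ψ + 1 := by
    simp only [ψ]; linear_combination sq5 / 4
  simp only [G]
  calc φ ^ (k + 2) - ψ ^ (k + 2) = φ ^ k * φ ^ 2 - ψ ^ k * ψ ^ 2 := by ring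
    _ = φ ^ k * (φ + 1) - ψ ^ k * (ψ + 1) := by rw [hφ, hψ]
    _ = (φ ^ (k + 1) - ψ ^ (k + 1)) + (φ ^ k - ψ ^ k) := by ring

lemma key (n : ℕ) :
    E (n + 2) = Real.log (A (n + 2)) - Real.log (A (n + 1)) - Real.log (A n) := by
  have ha : (1:ℝ) ≤ (A n : ℝ) := by exact_mod_cast A_pos n
  have hb : (1:ℝ) ≤ (A (n + 1) : ℝ) := by exact_mod_cast A_pos (n + 1)
  have hc : (1:ℝ) ≤ (A (n + 2) : ℝ) := by exact_mod_cast A_pos (n + 2)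
  have ha0 : (A n : ℝ) ≠ 0 := by linarith
  have hb0 : (A (n + 1) : ℝ) ≠ 0 := by linarith
  have h2 := congrArg (Nat.cast : ℕ → ℝ) (A_two_mul n)
  have hsub : ((A (n + 1) - A n : ℕ) : ℝ) = (A (n + 1) : ℝ) - (A n : ℝ) :=
    Nat.cast_sub (A_lt n).le
  push_cast at h2
  rw [hsub] at h2
  have hE : E (n + 2) = Real.log ((A (n + 2) : ℝ) / ((A (n + 1) : ℝ) * (A n : ℝ))) := by
    have h1 : n + 2 - 1 = n + 1 := by omega
    have h2' : n + 2 - 2 = n := by omega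
    rw [E, h1, h2']
    congr 1
    field_simp
    linear_combination (-1 : ℝ) * h2
  rw [hE, Real.log_div (by positivity) (by positivity),
    Real.log_mul hb0 ha0]
  ring

lemma main_lemma : ∀ n : ℕ, Real.log (A n) =
    Real.log 2 * G n / Real.sqrt 5 +
      (1 / Real.sqrt 5) * ∑ i ∈ Finset.Icc 2 n, E i * G (n - i + 1) := by
  intro n
  induction n using Nat.strong_induction_on with
  | _ n ih =>
    match n with
    | 0 => simp [A, G_zero]
    | 1 =>
      have he : Finset.Icc 2 1 = (∅ : Finset ℕ) := by decide
      rw [he]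
      simp only [Finset.sum_empty, mul_zero, add_zero, G_one]
      show Real.log ((A 1 : ℕ) : ℝ) = _
      rw [show ((A 1 : ℕ) : ℝ) = 2 by norm_num [A]]
      rw [mul_div_assoc, div_self (ne_of_gt sqrt5_pos), mul_one]
    | n + 2 =>
      have ih1 := ih n (by omega)
      have ih2 := ih (n + 1) (by omega)
      have hk := key n
      have hsum3 : ∑ i ∈ Finset.Icc 2 n, E i * G (n - i + 1)
          = ∑ i ∈ Finset.Icc 2 (n + 1), E i * G (n + 1 - i) := by
        match n with
        | 0 => simp
        | m + 1 =>
          rw [Finset.sum_Icc_succ_top (show (2:ℕ) ≤ m + 1 + 1 by omega)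
            (fun i => E i * G (m + 1 + 1 - i))]
          rw [Nat.sub_self, G_zero, mul_zero, add_zero]
          apply Finset.sum_congr rfl
          intro i hi
          simp only [Finset.mem_Icc] at hi
          congr 2
          omega
      have hstep : ∑ i ∈ Finset.Icc 2 (n + 2), E i * G (n + 2 - i + 1)
          = ∑ i ∈ Finset.Icc 2 (n + 1), E i * G (n + 1 - i + 1)
            + ∑ i ∈ Finset.Icc 2 n, E i * G (n - i + 1) + E (n + 2) * G 1 := by
        have htop : n + 2 - (n + 2) + 1 = 1 := by omega
        have hmid : ∑ i ∈ Finset.Icc 2 (n + 1), E i * G (n + 2 - i + 1)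
            = ∑ i ∈ Finset.Icc 2 (n + 1), (E i * G (n + 1 - i + 1) + E i * G (n + 1 - i)) := by
          apply Finset.sum_congr rfl
          intro i hi
          simp only [Finset.mem_Icc] at hi
          have h1 : n + 2 - i + 1 = (n + 1 - i) + 2 := by omega
          rw [h1, G_rec, mul_add]
        rw [Finset.sum_Icc_succ_top (show (2:ℕ) ≤ n + 2 by omega)
            (fun i => E i * G (n + 2 - i + 1)), htop, hmid,
          Finset.sum_add_distrib, hsum3]
      have hE : E (n + 2) = Real.log (A (n + 2)) - Real.log (A (n + 1)) - Real.log (A n) := hk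
      have hlog : Real.log (A (n + 2)) = Real.log (A (n + 1)) + Real.log (A n) + E (n + 2) := by
        rw [hE]; ring
      rw [hlog, ih1, ih2, hstep, G_rec, G_one]
      have h5 : Real.sqrt 5 ≠ 0 := ne_of_gt sqrt5_pos
      field_simp
      ring

theorem stmt_7 : ∀ n : ℕ, 2 ≤ n →
    Real.log (A n) =
      Real.log 2 * (φ ^ n - ψ ^ n) / Real.sqrt 5 +
        (1 / Real.sqrt 5) *
          ∑ i ∈ Finset.Icc 2 n, E i * (φ ^ (n - i + 1) - ψ ^ (n - i + 1)) := by
  intro n _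
  exact main_lemma n
end

section
/- Let A : ℕ → ℕ be defined by A(0) = 1, A(1) = 2, and A(n) = 1 + C(A(n−2)+1, 2) + A(n−2)·(A(n−1) − A(n−2)) for n ≥ 2, for n ≥ 2 let E(n) = log(1 + 1/(2·A(n−1)) − A(n−2)/(2·A(n−1)) + 1/(A(n−1)·A(n−2))), and let φ = (1+√5)/2. Define K₂ = exp((1/√5)·(log 2 + ∑_{i=2}^{∞} E(i)·φ^{1−i})). Then 1.48369 < K₂ < 1.48370. -/
lemma two_A (n : ℕ) : 2 * A (n+2) = 2 + A n * (A n + 1) + 2 * (A n * (A (n+1) - A n)) := by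
  have h : A (n+2) = 1 + Nat.choose (A n + 1) 2 + A n * (A (n+1) - A n) := rfl
  obtain ⟨k, hk⟩ := Nat.even_mul_succ_self (A n)
  have hc : Nat.choose (A n + 1) 2 = k := by
    rw [Nat.choose_two_right, Nat.add_sub_cancel, Nat.mul_comm, hk]
    omega
  rw [h, hc, hk]
  generalize A n * (A (n+1) - A n) = t
  omega

lemma A_ge_one : ∀ n, 1 ≤ A n
  | 0 => le_refl 1
  | 1 => by norm_num [A]
  | n + 2 => by show 1 ≤ 1 + _ + _; omega

lemma A_mono (n : ℕ) : A n ≤ A (n+1) := by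
  induction n with
  | zero => norm_num [A]
  | succ m ih =>
    show A (m+1) ≤ A (m+2)
    have h := two_A m
    have h1 := A_ge_one m
    have h2 : 2 * A m ≤ A m * (A m + 1) := by nlinarith
    have hd : (A (m+1) - A m) ≤ A m * (A (m+1) - A m) :=
      Nat.le_mul_of_pos_left _ h1
    generalize hX : A m * (A m + 1) = X at h h2
    generalize hY : A m * (A (m+1) - A m) = Y at h hd
    omega

lemma A_0 : A 0 = 1 := rfl
lemma A_1 : A 1 = 2 := rfl
lemma A_2 : A 2 = 3 := rfl
lemma A_3 : A 3 = 6 := rfl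
lemma A_4 : A 4 = 16 := rfl
lemma A_5 : A 5 = 82 := rfl
lemma A_6 : A 6 = 1193 := rfl
lemma A_7 : A 7 = 94506 := by
  have h := two_A 5
  norm_num [A_5, A_6] at h
  omega

lemma A_8 : A 8 = 112034631 := by
  have h := two_A 6
  norm_num [A_6, A_7] at h
  omega

lemma A_9 : A 9 = 10583479192522 := by
  have h := two_A 7
  norm_num [A_7, A_8] at h
  omega

lemma A_real_one (n : ℕ) : 1 ≤ (A n : ℝ) := by exact_mod_cast A_ge_one n

lemma A_real_mono (n : ℕ) : (A n : ℝ) ≤ (A (n+1) : ℝ) := by exact_mod_cast A_mono n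

lemma hA_real (n : ℕ) :
    2 * (A (n+2) : ℝ) = 2 + (A n : ℝ) + 2 * (A n : ℝ) * (A (n+1) : ℝ) - (A n : ℝ)^2 := by
  have h := two_A n
  have hm := A_mono n
  have h2 := congrArg (fun x : ℕ => (x : ℝ)) h
  push_cast [Nat.cast_sub hm] at h2
  linear_combination h2

lemma E_eq (n : ℕ) : E (n+2) = Real.log ((A (n+2) : ℝ) / ((A (n+1) : ℝ) * (A n : ℝ))) := by
  have ha := A_real_one (n+1)
  have hb := A_real_one n
  have ha0 : (A (n+1) : ℝ) ≠ 0 := by linarith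
  have hb0 : (A n : ℝ) ≠ 0 := by linarith
  show Real.log _ = _
  congr 1
  have h := hA_real n
  rw [show n + 2 - 1 = n + 1 by omega, show n + 2 - 2 = n by omega]
  field_simp
  linear_combination -h

-- ratio bounds
lemma A_monotone : Monotone A := monotone_nat_of_le_succ A_mono

lemma ratio_bounds (n : ℕ) :
    1/2 ≤ (A (n+2) : ℝ) / ((A (n+1) : ℝ) * (A n : ℝ)) ∧
    (A (n+2) : ℝ) / ((A (n+1) : ℝ) * (A n : ℝ)) ≤ 2 := by
  have ha := A_real_one (n+1)
  have hb := A_real_one n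
  have hm := A_real_mono n
  have h := hA_real n
  have hab : (0:ℝ) < (A (n+1) : ℝ) * (A n : ℝ) := by nlinarith
  constructor
  · rw [le_div_iff₀ hab]; nlinarith
  · rw [div_le_iff₀ hab]; nlinarith

lemma E_abs_le_one (n : ℕ) : |E (n+2)| ≤ 1 := by
  obtain ⟨h1, h2⟩ := ratio_bounds n
  set r := (A (n+2) : ℝ) / ((A (n+1) : ℝ) * (A n : ℝ)) with hr
  have hrpos : (0:ℝ) < r := by linarith
  rw [E_eq n, ← hr, abs_le]
  have hu : Real.log r ≤ r - 1 := Real.log_le_sub_one_of_pos hrpos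
  have hl : Real.log r⁻¹ ≤ r⁻¹ - 1 := Real.log_le_sub_one_of_pos (inv_pos.2 hrpos)
  rw [Real.log_inv] at hl
  have hinv : r⁻¹ ≤ 2 := by
    rw [inv_le_comm₀ (by linarith) (by norm_num)]; linarith
  constructor <;> linarith

lemma E_tail (n : ℕ) : |E (n+10)| ≤ 1/90000 := by
  have h10 : n + 10 = (n + 8) + 2 := by omega
  rw [h10, E_eq (n+8)]
  have ha := A_real_one (n+9)
  have hb := A_real_one (n+8)
  have hm := A_real_mono (n+8)
  have h := hA_real (n+8)
  -- A (n+8) ≥ 3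
  have hb3 : (3:ℝ) ≤ (A (n+8) : ℝ) := by
    have : A 2 ≤ A (n+8) := A_monotone (by omega)
    rw [A_2] at this; exact_mod_cast this
  -- 94506 * A (n+8) ≤ 2 * A (n+9)
  have hkey : (94506:ℝ) * (A (n+8) : ℝ) ≤ 2 * (A (n+9) : ℝ) := by
    have h7 : (94506:ℝ) ≤ (A (n+7) : ℝ) := by
      have : A 7 ≤ A (n+7) := A_monotone (by omega)
      rw [A_7] at this; exact_mod_cast this
    have hlb := hA_real (n+7)
    have hm7 := A_real_mono (n+7)
    have h17 := A_real_one (n+7)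
    have hidx : n + 7 + 2 = n + 9 := by omega
    have hidx2 : n + 7 + 1 = n + 8 := by omega
    rw [hidx, hidx2] at hlb
    rw [hidx2] at hm7
    nlinarith [mul_nonneg (sub_nonneg.2 h7) (by linarith : (0:ℝ) ≤ (A (n+8) : ℝ)),
      mul_nonneg (by linarith : (0:ℝ) ≤ (A (n+7) : ℝ)) (sub_nonneg.2 hm7)]
  have hab : (0:ℝ) < (A (n+9) : ℝ) * (A (n+8) : ℝ) := by nlinarith
  set r := (A ((n+8)+2) : ℝ) / ((A ((n+8)+1) : ℝ) * (A (n+8) : ℝ)) with hr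
  have hidx3 : n + 8 + 2 = n + 10 := by omega
  have hidx4 : n + 8 + 1 = n + 9 := by omega
  rw [hidx3, hidx4] at hr
  have hr1 : r ≤ 1 := by
    rw [hr, div_le_one hab]
    have h' := hA_real (n+8)
    rw [hidx3, hidx4] at h'
    nlinarith [mul_nonneg (by linarith : (0:ℝ) ≤ (A (n+8) : ℝ) - 2)
      (by linarith : (0:ℝ) ≤ (A (n+8) : ℝ) + 1)]
  have hr0 : 1 - 1/94506 ≤ r := by
    rw [hr, le_div_iff₀ hab]
    have h' := hA_real (n+8)
    rw [hidx3, hidx4] at h'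
    nlinarith [mul_le_mul_of_nonneg_right hkey (by linarith : (0:ℝ) ≤ (A (n+8) : ℝ)),
      mul_nonneg (by linarith : (0:ℝ) ≤ (A (n+8) : ℝ) - 2)
      (by linarith : (0:ℝ) ≤ (A (n+8) : ℝ) + 1)]
  have hrpos : (0:ℝ) < r := by linarith
  have hl : Real.log r⁻¹ ≤ r⁻¹ - 1 := Real.log_le_sub_one_of_pos (inv_pos.2 hrpos)
  rw [Real.log_inv] at hl
  have hinv : r⁻¹ ≤ 1 + 1/90000 := by
    rw [inv_le_comm₀ (by linarith) (by norm_num)]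
    norm_num
    linarith
  have hlog1 : Real.log r ≤ 0 := Real.log_nonpos (by linarith) hr1
  rw [abs_le]
  constructor <;> [linarith; linarith]
lemma e2 : E 2 = Real.log (3/2) := by
  unfold E
  norm_num [A_0, A_1]

lemma e3 : E 3 = 0 := by
  unfold E
  norm_num [A_1, A_2, Real.log_one]

lemma e4 : E 4 = Real.log (8/9) := by
  unfold E
  norm_num [A_2, A_3]

lemma e5 : E 5 = Real.log (41/48) := by
  unfold E
  norm_num [A_3, A_4]

lemma e6 : E 6 = Real.log (1193/1312) := by
  unfold E
  norm_num [A_4, A_5]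

lemma e7 : E 7 = Real.log (47253/48913) := by
  unfold E
  norm_num [A_5, A_6]

lemma e8 : E 8 = Real.log (37344877/37581886) := by
  unfold E
  norm_num [A_6, A_7]

lemma e9 : E 9 = Real.log (5291739596261/5293972418643) := by
  unfold E
  norm_num [A_7, A_8]

lemma hE2 : (4054651043/10000000000 : ℝ) ≤ E 2 ∧ E 2 ≤ (2027325559/5000000000 : ℝ) := by
  have h := Real.abs_log_sub_add_sum_range_le
    (x := (-(1/2) : ℝ)) (by rw [abs_lt]; constructor <;> norm_num) 28
  rw [show |(-(1/2) : ℝ)| = 1/2 by rw [abs_neg]; rw [abs_of_nonneg] <;> norm_num] at h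
  rw [abs_le] at h
  obtain ⟨h1, h2⟩ := h
  rw [show (1 - (-(1/2)) : ℝ) = 3/2 by norm_num] at h1 h2
  simp only [Finset.sum_range_succ, Finset.sum_range_zero] at h1 h2
  norm_num at h1 h2
  rw [e2]
  constructor <;> linarith

lemma hE4 : (-1177830383/10000000000 : ℝ) ≤ E 4 ∧ E 4 ≤ (-294457581/2500000000 : ℝ) := by
  have h := Real.abs_log_sub_add_sum_range_le
    (x := ((1/9) : ℝ)) (by rw [abs_lt]; constructor <;> norm_num) 8
  rw [show |((1/9) : ℝ)| = 1/9 by rw [abs_of_nonneg] <;> norm_num] at h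
  rw [abs_le] at h
  obtain ⟨h1, h2⟩ := h
  rw [show (1 - ((1/9)) : ℝ) = 8/9 by norm_num] at h1 h2
  simp only [Finset.sum_range_succ, Finset.sum_range_zero] at h1 h2
  norm_num at h1 h2
  rw [e4]
  constructor <;> linarith

lemma hE5 : (-788144877/5000000000 : ℝ) ≤ E 5 ∧ E 5 ≤ (-788144527/5000000000 : ℝ) := by
  have h := Real.abs_log_sub_add_sum_range_le
    (x := ((7/48) : ℝ)) (by rw [abs_lt]; constructor <;> norm_num) 8
  rw [show |((7/48) : ℝ)| = 7/48 by rw [abs_of_nonneg] <;> norm_num] at h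
  rw [abs_le] at h
  obtain ⟨h1, h2⟩ := h
  rw [show (1 - ((7/48)) : ℝ) = 41/48 by norm_num] at h1 h2
  simp only [Finset.sum_range_succ, Finset.sum_range_zero] at h1 h2
  norm_num at h1 h2
  rw [e5]
  constructor <;> linarith

lemma hE6 : (-59425997/625000000 : ℝ) ≤ E 6 ∧ E 6 ≤ (-23770371/250000000 : ℝ) := by
  have h := Real.abs_log_sub_add_sum_range_le
    (x := ((119/1312) : ℝ)) (by rw [abs_lt]; constructor <;> norm_num) 6
  rw [show |((119/1312) : ℝ)| = 119/1312 by rw [abs_of_nonneg] <;> norm_num] at h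
  rw [abs_le] at h
  obtain ⟨h1, h2⟩ := h
  rw [show (1 - ((119/1312)) : ℝ) = 1193/1312 by norm_num] at h1 h2
  simp only [Finset.sum_range_succ, Finset.sum_range_zero] at h1 h2
  norm_num at h1 h2
  rw [e6]
  constructor <;> linarith

lemma hE7 : (-21579417/625000000 : ℝ) ≤ E 7 ∧ E 7 ≤ (-345270639/10000000000 : ℝ) := by
  have h := Real.abs_log_sub_add_sum_range_le
    (x := ((1660/48913) : ℝ)) (by rw [abs_lt]; constructor <;> norm_num) 5
  rw [show |((1660/48913) : ℝ)| = 1660/48913 by rw [abs_of_nonneg] <;> norm_num] at h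
  rw [abs_le] at h
  obtain ⟨h1, h2⟩ := h
  rw [show (1 - ((1660/48913)) : ℝ) = 47253/48913 by norm_num] at h1 h2
  simp only [Finset.sum_range_succ, Finset.sum_range_zero] at h1 h2
  norm_num at h1 h2
  rw [e7]
  constructor <;> linarith

lemma hE8 : (-63264389/10000000000 : ℝ) ≤ E 8 ∧ E 8 ≤ (-63264387/10000000000 : ℝ) := by
  have h := Real.abs_log_sub_add_sum_range_le
    (x := ((237009/37581886) : ℝ)) (by rw [abs_lt]; constructor <;> norm_num) 4
  rw [show |((237009/37581886) : ℝ)| = 237009/37581886 by rw [abs_of_nonneg] <;> norm_num] at h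
  rw [abs_le] at h
  obtain ⟨h1, h2⟩ := h
  rw [show (1 - ((237009/37581886)) : ℝ) = 37344877/37581886 by norm_num] at h1 h2
  simp only [Finset.sum_range_succ, Finset.sum_range_zero] at h1 h2
  norm_num at h1 h2
  rw [e8]
  constructor <;> linarith

lemma hE9 : (-4218559/10000000000 : ℝ) ≤ E 9 ∧ E 9 ≤ (-2109279/5000000000 : ℝ) := by
  have h := Real.abs_log_sub_add_sum_range_le
    (x := ((2232822382/5293972418643) : ℝ)) (by rw [abs_lt]; constructor <;> norm_num) 3
  rw [show |((2232822382/5293972418643) : ℝ)| = 2232822382/5293972418643 by rw [abs_of_nonneg] <;> norm_num] at h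
  rw [abs_le] at h
  obtain ⟨h1, h2⟩ := h
  rw [show (1 - ((2232822382/5293972418643)) : ℝ) = 5291739596261/5293972418643 by norm_num] at h1 h2
  simp only [Finset.sum_range_succ, Finset.sum_range_zero] at h1 h2
  norm_num at h1 h2
  rw [e9]
  constructor <;> linarith

noncomputable def K₂ : ℝ :=
  Real.exp ((1 / Real.sqrt 5) *
    (Real.log 2 + ∑' i : {i : ℕ // 2 ≤ i}, E i * φ ^ (1 - (i : ℤ))))

lemma sqrt5_gt : (2.23606797 : ℝ) < Real.sqrt 5 := by
  nlinarith [Real.sq_sqrt (show (0:ℝ) ≤ 5 by norm_num), Real.sqrt_nonneg 5]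

lemma sqrt5_lt : Real.sqrt 5 < 2.23606798 := by
  nlinarith [Real.sq_sqrt (show (0:ℝ) ≤ 5 by norm_num), Real.sqrt_nonneg 5]

lemma phi_inv_eq : φ⁻¹ = (Real.sqrt 5 - 1) / 2 := by
  have h5 := Real.sq_sqrt (show (0:ℝ) ≤ 5 by norm_num)
  have h : φ * ((Real.sqrt 5 - 1) / 2) = 1 := by
    unfold φ; linear_combination h5 / 4
  exact inv_eq_of_mul_eq_one_right h

lemma psi_ge : (0.618033985 : ℝ) ≤ φ⁻¹ := by rw [phi_inv_eq]; linarith [sqrt5_gt]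
lemma psi_le : φ⁻¹ ≤ (0.61803399 : ℝ) := by rw [phi_inv_eq]; linarith [sqrt5_lt]
lemma psi_nonneg : (0:ℝ) ≤ φ⁻¹ := le_trans (by norm_num) psi_ge

noncomputable def g (n : ℕ) : ℝ := E (n+2) * φ⁻¹ ^ (n+1)

lemma g_summable : Summable g := by
  apply Summable.of_norm_bounded (g := fun n => (0.62:ℝ)^n)
    (summable_geometric_of_lt_one (by norm_num) (by norm_num))
  intro n
  show ‖E (n+2) * φ⁻¹ ^ (n+1)‖ ≤ _
  rw [norm_mul, Real.norm_eq_abs, Real.norm_eq_abs, abs_pow, abs_of_nonneg psi_nonneg]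
  calc |E (n+2)| * φ⁻¹ ^ (n+1) ≤ 1 * (0.62:ℝ)^(n+1) :=
        mul_le_mul (E_abs_le_one n)
          (pow_le_pow_left₀ psi_nonneg (le_trans psi_le (by norm_num)) (n+1))
          (pow_nonneg psi_nonneg _) zero_le_one
    _ ≤ (0.62:ℝ)^n := by
        rw [one_mul, pow_succ]
        exact mul_le_of_le_one_right (pow_nonneg (by norm_num) n) (by norm_num)

lemma tail_bound : |∑' n : ℕ, g (n+8)| ≤ (0.000000383 : ℝ) := by
  have hns8 : Summable (fun n => ‖g (n+8)‖) :=
    (summable_nat_add_iff 8).2 (summable_norm_iff.2 g_summable)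
  have hgeo : Summable (fun n => (1/90000 * (0.61803399:ℝ)^9) * (0.61803399:ℝ)^n) :=
    (summable_geometric_of_lt_one (by norm_num) (by norm_num)).mul_left _
  calc |∑' n : ℕ, g (n+8)| ≤ ∑' n : ℕ, ‖g (n+8)‖ := by
        rw [← Real.norm_eq_abs]; exact norm_tsum_le_tsum_norm hns8
    _ ≤ ∑' n : ℕ, (1/90000 * (0.61803399:ℝ)^9) * (0.61803399:ℝ)^n := by
        apply Summable.tsum_le_tsum _ hns8 hgeo
        intro n
        have hidx : n + 8 + 2 = n + 10 := by omega
        have hidx2 : n + 8 + 1 = n + 9 := by omega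
        show ‖E (n+8+2) * φ⁻¹ ^ (n+8+1)‖ ≤ _
        rw [hidx, hidx2, norm_mul, Real.norm_eq_abs, Real.norm_eq_abs, abs_pow,
          abs_of_nonneg psi_nonneg]
        calc |E (n+10)| * φ⁻¹ ^ (n+9)
            ≤ (1/90000) * (0.61803399:ℝ)^(n+9) :=
              mul_le_mul (E_tail n) (pow_le_pow_left₀ psi_nonneg psi_le _)
                (pow_nonneg psi_nonneg _) (by norm_num)
          _ = (1/90000 * (0.61803399:ℝ)^9) * (0.61803399:ℝ)^n := by
              rw [pow_add]; ring
    _ = (1/90000 * (0.61803399:ℝ)^9) * (1 - 0.61803399)⁻¹ := by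
        rw [tsum_mul_left, tsum_geometric_of_lt_one (by norm_num) (by norm_num)]
    _ ≤ (0.000000383 : ℝ) := by norm_num

def eqv : ℕ ≃ {i : ℕ // 2 ≤ i} where
  toFun n := ⟨n + 2, by omega⟩
  invFun i := i.1 - 2
  left_inv n := by simp
  right_inv i := by ext; simp; omega

lemma tsum_eq_g :
    (∑' i : {i : ℕ // 2 ≤ i}, E i * φ ^ (1 - (i : ℤ))) = ∑' n : ℕ, g n := by
  rw [← Equiv.tsum_eq eqv (fun i : {i : ℕ // 2 ≤ i} => E i * φ ^ (1 - (i : ℤ)))]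
  apply tsum_congr
  intro n
  show E (n+2) * φ ^ (1 - ((n+2 : ℕ) : ℤ)) = g n
  unfold g
  congr 1
  have h1 : (1 - ((n+2 : ℕ) : ℤ)) = -((n+1 : ℕ) : ℤ) := by push_cast; ring
  rw [h1, zpow_neg, zpow_natCast, inv_pow]

lemma mul_bnd_neg {x a b p c d : ℝ} (h1 : a ≤ x) (h2 : x ≤ b) (hb : b ≤ 0)
    (h3 : c ≤ p) (h4 : p ≤ d) (hc : 0 ≤ c) : a * d ≤ x * p ∧ x * p ≤ b * c := by
  have hx0 : x ≤ 0 := le_trans h2 hb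
  have hd0 : 0 ≤ d := le_trans hc (le_trans h3 h4)
  constructor
  · calc a * d ≤ x * d := mul_le_mul_of_nonneg_right h1 hd0
      _ ≤ x * p := mul_le_mul_of_nonpos_left h4 hx0
  · calc x * p ≤ x * c := mul_le_mul_of_nonpos_left h3 hx0
      _ ≤ b * c := mul_le_mul_of_nonneg_right h2 hc

lemma mul_bnd_pos {x a b p c d : ℝ} (h1 : a ≤ x) (h2 : x ≤ b) (ha : 0 ≤ a)
    (h3 : c ≤ p) (h4 : p ≤ d) (hc : 0 ≤ c) : a * c ≤ x * p ∧ x * p ≤ b * d := by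
  have hx0 : 0 ≤ x := ha.trans h1
  have hp0 : 0 ≤ p := hc.trans h3
  constructor
  · calc a * c ≤ a * p := mul_le_mul_of_nonneg_left h3 ha
      _ ≤ x * p := mul_le_mul_of_nonneg_right h1 hp0
  · calc x * p ≤ x * d := mul_le_mul_of_nonneg_left h4 hx0
      _ ≤ b * d := mul_le_mul_of_nonneg_right h2 (hc.trans (h3.trans h4))

lemma psi_pow_bnd (k : ℕ) :
    (0.618033985:ℝ)^k ≤ φ⁻¹^k ∧ φ⁻¹^k ≤ (0.61803399:ℝ)^k :=
  ⟨pow_le_pow_left₀ (by norm_num) psi_ge k, pow_le_pow_left₀ psi_nonneg psi_le k⟩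

lemma P_bounds : (94532074451/500000000000 : ℝ) ≤ ∑ n ∈ Finset.range 8, g n ∧
    (∑ n ∈ Finset.range 8, g n) ≤ (18906417927/100000000000 : ℝ) := by
  have hexp : ∑ n ∈ Finset.range 8, g n =
      E 2 * φ⁻¹ + E 3 * φ⁻¹^2 + E 4 * φ⁻¹^3 + E 5 * φ⁻¹^4 + E 6 * φ⁻¹^5 +
      E 7 * φ⁻¹^6 + E 8 * φ⁻¹^7 + E 9 * φ⁻¹^8 := by
    simp [g, Finset.sum_range_succ]
  rw [hexp, e3]
  have t2 := mul_bnd_pos hE2.1 hE2.2 (by norm_num) psi_ge psi_le (by norm_num)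
  have t4 := mul_bnd_neg hE4.1 hE4.2 (by norm_num) (psi_pow_bnd 3).1 (psi_pow_bnd 3).2 (by positivity)
  have t5 := mul_bnd_neg hE5.1 hE5.2 (by norm_num) (psi_pow_bnd 4).1 (psi_pow_bnd 4).2 (by positivity)
  have t6 := mul_bnd_neg hE6.1 hE6.2 (by norm_num) (psi_pow_bnd 5).1 (psi_pow_bnd 5).2 (by positivity)
  have t7 := mul_bnd_neg hE7.1 hE7.2 (by norm_num) (psi_pow_bnd 6).1 (psi_pow_bnd 6).2 (by positivity)
  have t8 := mul_bnd_neg hE8.1 hE8.2 (by norm_num) (psi_pow_bnd 7).1 (psi_pow_bnd 7).2 (by positivity)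
  have t9 := mul_bnd_neg hE9.1 hE9.2 (by norm_num) (psi_pow_bnd 8).1 (psi_pow_bnd 8).2 (by positivity)
  have b2l : (62647803547/250000000000 : ℝ) ≤ E 2 * φ⁻¹ := le_trans (by norm_num) t2.1
  have b2u : E 2 * φ⁻¹ ≤ (62647805213/250000000000 : ℝ) := le_trans t2.2 (by norm_num)
  have b4l : (-6951200951/250000000000 : ℝ) ≤ E 4 * φ⁻¹^3 := le_trans (by norm_num) t4.1
  have b4u : E 4 * φ⁻¹^3 ≤ (-3475600217/125000000000 : ℝ) := le_trans t4.2 (by norm_num)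
  have b5l : (-71867993/3125000000 : ℝ) ≤ E 5 * φ⁻¹^4 := le_trans (by norm_num) t5.1
  have b5u : E 5 * φ⁻¹^4 ≤ (-22997746801/1000000000000 : ℝ) := le_trans t5.2 (by norm_num)
  have b6l : (-4286751089/500000000000 : ℝ) ≤ E 6 * φ⁻¹^5 := le_trans (by norm_num) t6.1
  have b6u : E 6 * φ⁻¹^5 ≤ (-8573491803/1000000000000 : ℝ) := le_trans t6.2 (by norm_num)
  have b7l : (-481031883/250000000000 : ℝ) ≤ E 7 * φ⁻¹^6 := le_trans (by norm_num) t7.1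
  have b7u : E 7 * φ⁻¹^6 ≤ (-962063627/500000000000 : ℝ) := le_trans t7.2 (by norm_num)
  have b8l : (-217894287/1000000000000 : ℝ) ≤ E 8 * φ⁻¹^7 := le_trans (by norm_num) t8.1
  have b8u : E 8 * φ⁻¹^7 ≤ (-217894267/1000000000000 : ℝ) := le_trans t8.2 (by norm_num)
  have b9l : (-359189/40000000000 : ℝ) ≤ E 9 * φ⁻¹^8 := le_trans (by norm_num) t9.1
  have b9u : E 9 * φ⁻¹^8 ≤ (-8979721/1000000000000 : ℝ) := le_trans t9.2 (by norm_num)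
  constructor <;> [linarith; linarith]

theorem stmt_18 : 1.48369 < K₂ ∧ K₂ < 1.48370 := by
  have hsplit : (∑' n : ℕ, g n) = ∑ n ∈ Finset.range 8, g n + ∑' n : ℕ, g (n+8) :=
    (Summable.sum_add_tsum_nat_add 8 g_summable).symm
  have hT : (441105473101/500000000000 : ℝ) ≤
      Real.log 2 + ∑' i : {i : ℕ // 2 ≤ i}, E i * φ ^ (1 - (i : ℤ)) ∧
      Real.log 2 + (∑' i : {i : ℕ // 2 ≤ i}, E i * φ ^ (1 - (i : ℤ))) ≤
      (88221174307/100000000000 : ℝ) := by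
    rw [tsum_eq_g, hsplit]
    have h1 := P_bounds
    have h2 := abs_le.1 tail_bound
    have hl2a := Real.log_two_gt_d9
    have hl2b := Real.log_two_lt_d9
    constructor <;> [linarith; linarith]
  have harg : (49317091/125000000 : ℝ) ≤
      (1 / Real.sqrt 5) * (Real.log 2 + ∑' i : {i : ℕ // 2 ≤ i}, E i * φ ^ (1 - (i : ℤ))) ∧
      (1 / Real.sqrt 5) * (Real.log 2 + ∑' i : {i : ℕ // 2 ≤ i}, E i * φ ^ (1 - (i : ℤ))) ≤
      (394537087/1000000000 : ℝ) := by
    have hs5 : (0:ℝ) < Real.sqrt 5 := by linarith [sqrt5_gt]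
    rw [one_div, inv_mul_eq_div]
    constructor
    · rw [le_div_iff₀ hs5]
      nlinarith [sqrt5_lt, hT.1]
    · rw [div_le_iff₀ hs5]
      nlinarith [sqrt5_gt, hT.2]
  constructor
  · have h1 : (1.48369:ℝ) < Real.exp (49317091/125000000) := by
      have hs := Real.sum_le_exp_of_nonneg (show (0:ℝ) ≤ 49317091/125000000 by norm_num) 10
      have h2 : (1.48369:ℝ) < ∑ m ∈ Finset.range 10, (49317091/125000000:ℝ)^m / m.factorial := by
        simp only [Finset.sum_range_succ, Finset.sum_range_zero, Nat.factorial]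
        norm_num
      linarith
    have h2 : Real.exp (49317091/125000000) ≤ K₂ := by
      unfold K₂; exact Real.exp_le_exp.2 harg.1
    linarith
  · have h1 : K₂ ≤ Real.exp (394537087/1000000000) := by
      unfold K₂; exact Real.exp_le_exp.2 harg.2
    have h2 : Real.exp (394537087/1000000000) < 1.48370 := by
      have hb := Real.exp_bound' (show (0:ℝ) ≤ 394537087/1000000000 by norm_num)
        (show (394537087/1000000000:ℝ) ≤ 1 by norm_num) (show 0 < 10 by norm_num)
      have h3 : (∑ m ∈ Finset.range 10, (394537087/1000000000:ℝ)^m / m.factorial) +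
          (394537087/1000000000:ℝ)^10 * (10+1) / (Nat.factorial 10 * 10) < 1.48370 := by
        simp only [Finset.sum_range_succ, Finset.sum_range_zero, Nat.factorial]
        norm_num
      linarith
    linarith
end
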